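/- For pointed Kripke models (M,w) and (N,v) and a set Q of generalized modalities: if (M,w) and (N,v) satisfy the same PL(Q)-formulas of modal depth at most d, then N,v satisfies the canonical Q-characteristic formula φ^{Q,d}_{M⊔N,w} of w computed in the disjoint union M⊔N. -/
import Mathlib


/-- A Kripke model over proposition symbols `P` with node set `V`. -/
structure Kripke (P V : Type) where
  succ : V → Finset V
  label : V → P → Prop

/-- Formulas of `PL(𝒬)`: propositional logic extended with generalized modalities
indexed by `ι`. -/
inductive PLQ (P ι : Type) : Type
  | bot : PLQ P ι
  | prop : P → PLQ P ι
  | neg : PLQ P ι → PLQ P ι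
  | and : PLQ P ι → PLQ P ι → PLQ P ι
  | or : PLQ P ι → PLQ P ι → PLQ P ι
  | app : ι → PLQ P ι → PLQ P ι

/-- Modal depth of a `PL(𝒬)` formula. -/
def PLQ.md {P ι : Type} : PLQ P ι → ℕ
  | .bot => 0
  | .prop _ => 0
  | .neg φ => φ.md
  | .and φ ψ => max φ.md ψ.md
  | .or φ ψ => max φ.md ψ.md
  | .app _ φ => φ.md + 1

/-- Satisfaction of `PL(𝒬)` formulas. A generalized quantifier is an
isomorphism-closed class of structures `(D, P)` with `P ⊆ D`, so it is determined by
the pair of cardinalities `(|D|, |P|)`; accordingly the family `𝒬` is given as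
`Q : ι → ℕ → ℕ → Prop`, and `M,v ⊨ ⟨Q i⟩φ` iff
`(N(v), {u ∈ N(v) : M,u ⊨ φ}) ∈ Q i`, i.e. `Q i |N(v)| |{u ∈ N(v) : M,u ⊨ φ}|`. -/
def Kripke.SatQ {P V ι : Type} (M : Kripke P V) (Q : ι → ℕ → ℕ → Prop) :
    PLQ P ι → V → Prop
  | .bot, _ => False
  | .prop p, v => M.label v p
  | .neg φ, v => ¬ M.SatQ Q φ v
  | .and φ ψ, v => M.SatQ Q φ v ∧ M.SatQ Q ψ v
  | .or φ ψ, v => M.SatQ Q φ v ∨ M.SatQ Q ψ v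
  | .app i φ, v => Q i (M.succ v).card {u | u ∈ M.succ v ∧ M.SatQ Q φ u}.ncard

/-- Disjoint union `M ⊔ N` of two Kripke models. -/
def Kripke.sum {P V W : Type} (M : Kripke P V) (N : Kripke P W) : Kripke P (V ⊕ W) where
  succ := fun x => match x with
    | .inl a => (M.succ a).map ⟨Sum.inl, Sum.inl_injective⟩
    | .inr b => (N.succ b).map ⟨Sum.inr, Sum.inr_injective⟩
  label := fun x p => match x with
    | .inl a => M.label a p
    | .inr b => N.label b p

/-- `AttWin K Q d a b` : the player currently in the attacker role has a winning
strategy in the `d`-round `𝒬`-bisimulation game from position `(a, b)` (both pebbles on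
nodes of the single model `K`, e.g. a disjoint union). The attacker wins immediately if
the pebbled nodes disagree on a proposition symbol; otherwise the attacker selects a
pebble `u` (the other being `v`), a modality `⟨Q i⟩`, a set `X ⊆ N(u)` with
`(N(u),X) ∈ Q i`, and a set `P' ⊆ N(v)`; the defender may contest `X` or `P'`
(moving the pebbles as prescribed), or reply with `X' ⊆ N(v)` with `(N(v),X') ∈ Q i`
and `P' ⊆ X'`, after which the attacker may contest `X'` (becoming the defender), move
to `N(v) \ X'` × `X` (becoming the defender), or move one pebble into `X'` with the
defender answering in `X ∪ P'`. (By determinacy of this finite game, the defender,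
i.e. Player 2, has a winning strategy iff `AttWin` fails.) -/
def AttWin {P V ι : Type} [DecidableEq V] (K : Kripke P V) (Q : ι → ℕ → ℕ → Prop) :
    ℕ → V → V → Prop
  | 0, a, b => ¬ ∀ p, K.label a p ↔ K.label b p
  | (d+1), a, b => (¬ ∀ p, K.label a p ↔ K.label b p) ∨
      ∃ u v : V, ((u, v) = (a, b) ∨ (u, v) = (b, a)) ∧
      ∃ (i : ι) (X P' : Finset V), X ⊆ K.succ u ∧ Q i (K.succ u).card X.card ∧
        P' ⊆ K.succ v ∧
        (∀ x ∈ X, ∀ y ∈ K.succ u \ X, AttWin K Q d x y) ∧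
        (∀ y ∈ P', ∀ x ∈ K.succ u, AttWin K Q d x y) ∧
        (∀ X' : Finset V, X' ⊆ K.succ v → Q i (K.succ v).card X'.card → P' ⊆ X' →
          (∃ y ∈ X', ∃ z ∈ K.succ v \ X', ¬ AttWin K Q d y z) ∨
          (∃ y ∈ K.succ v \ X', ∃ x ∈ X, ¬ AttWin K Q d x y) ∨
          (∃ y ∈ X', ∀ x, (x ∈ X ∨ x ∈ P') → AttWin K Q d x y))

/-- `Player 2 (the defender) has a winning strategy in the `d`-round `𝒬`-bisimulation
game from position `(a,b)` (via determinacy of the finite game). -/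
def DefWin {P V ι : Type} [DecidableEq V] (K : Kripke P V) (Q : ι → ℕ → ℕ → Prop)
    (d : ℕ) (a b : V) : Prop := ¬ AttWin K Q d a b

/-- `CharSat K Q d w v` : `v` satisfies the canonical `𝒬`-characteristic depth-`d`
formula `φ^{𝒬,d}_{K,w}` of `w`. At depth 0 this is the full propositional agreement
with `w`; at depth `d+1` it additionally requires, for every modality `⟨Q i⟩` and every
set `C` of depth-`d` characteristic formulas of nodes of `K` (encoded by the set `S` of
nodes whose characteristic formulas constitute `C`, so that a node `u` satisfies `⋁C`
iff `∃ x ∈ S, CharSat K Q d x u`), that `⟨Q i⟩(⋁C)` holds at `v` iff it holds at `w`. -/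
def CharSat {P V ι : Type} (K : Kripke P V) (Q : ι → ℕ → ℕ → Prop) :
    ℕ → V → V → Prop
  | 0, w, v => ∀ p, K.label w p ↔ K.label v p
  | (d+1), w, v => (∀ p, K.label w p ↔ K.label v p) ∧
      ∀ (i : ι) (S : Set V),
        (Q i (K.succ w).card
            {u | u ∈ K.succ w ∧ ∃ x ∈ S, CharSat K Q d x u}.ncard ↔
         Q i (K.succ v).card
            {u | u ∈ K.succ v ∧ ∃ x ∈ S, CharSat K Q d x u}.ncard)

attribute [local instance] Classical.propDecidable

namespace CharSatAux

variable {P U ι : Type}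

/-- Finite conjunction. -/
def plqConj : List (PLQ P ι) → PLQ P ι
  | [] => .neg .bot
  | φ :: l => .and φ (plqConj l)

/-- Finite disjunction. -/
def plqDisj : List (PLQ P ι) → PLQ P ι
  | [] => .bot
  | φ :: l => .or φ (plqDisj l)

lemma satQ_plqConj (K : Kripke P U) (Q : ι → ℕ → ℕ → Prop) (l : List (PLQ P ι)) (u : U) :
    K.SatQ Q (plqConj l) u ↔ ∀ φ ∈ l, K.SatQ Q φ u := by
  induction l with
  | nil => simp [plqConj, Kripke.SatQ]
  | cons φ l ih => simp [plqConj, Kripke.SatQ, ih]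

lemma satQ_plqDisj (K : Kripke P U) (Q : ι → ℕ → ℕ → Prop) (l : List (PLQ P ι)) (u : U) :
    K.SatQ Q (plqDisj l) u ↔ ∃ φ ∈ l, K.SatQ Q φ u := by
  induction l with
  | nil => simp [plqDisj, Kripke.SatQ]
  | cons φ l ih => simp [plqDisj, Kripke.SatQ, ih]


lemma satQ_plqConj_map {α : Type} (K : Kripke P U) (Q : ι → ℕ → ℕ → Prop)
    (f : α → PLQ P ι) (l : List α) (u : U) :
    K.SatQ Q (plqConj (l.map f)) u ↔ ∀ a ∈ l, K.SatQ Q (f a) u := by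
  rw [satQ_plqConj]
  simp

lemma md_plqConj_le (l : List (PLQ P ι)) (d : ℕ) (h : ∀ φ ∈ l, φ.md ≤ d) :
    (plqConj l).md ≤ d := by
  induction l with
  | nil => simp [plqConj, PLQ.md]
  | cons φ l ih =>
    simp only [plqConj, PLQ.md, max_le_iff]
    exact ⟨h φ (by simp), ih fun ψ hψ => h ψ (by simp [hψ])⟩

lemma md_plqDisj_le (l : List (PLQ P ι)) (d : ℕ) (h : ∀ φ ∈ l, φ.md ≤ d) :
    (plqDisj l).md ≤ d := by
  induction l with
  | nil => simp [plqDisj, PLQ.md]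
  | cons φ l ih =>
    simp only [plqDisj, PLQ.md, max_le_iff]
    exact ⟨h φ (by simp), ih fun ψ hψ => h ψ (by simp [hψ])⟩

/-- A literal distinguishing `x` from `y` (or `⊤` if they agree on all propositions). -/
noncomputable def lit0 (K : Kripke P U) (x y : U) : PLQ P ι :=
  if h : ∀ p, K.label x p ↔ K.label y p then .neg .bot
  else if K.label x (not_forall.mp h).choose then .prop (not_forall.mp h).choose
       else .neg (.prop (not_forall.mp h).choose)

lemma md_lit0 (K : Kripke P U) (x y : U) : (lit0 (ι := ι) K x y).md = 0 := by
  unfold lit0; split_ifs <;> simp [PLQ.md]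

lemma sat_lit0 (K : Kripke P U) (Q : ι → ℕ → ℕ → Prop) (x y u : U)
    (hagree : ∀ p, K.label x p ↔ K.label u p) : K.SatQ Q (lit0 K x y) u := by
  unfold lit0
  split_ifs with h1 h2
  · show ¬ False; exact not_false
  · exact (hagree _).mp h2
  · show ¬ K.label u _
    intro hc
    exact h2 ((hagree _).mpr hc)

lemma agree_of_sat_lit0 (K : Kripke P U) (Q : ι → ℕ → ℕ → Prop) (x u : U)
    (hs : K.SatQ Q (lit0 K x u) u) : ∀ p, K.label x p ↔ K.label u p := by
  unfold lit0 at hs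
  split_ifs at hs with h1 h2
  · exact h1
  · exact absurd (iff_of_true h2 hs) (not_forall.mp h1).choose_spec
  · exact absurd (iff_of_false h2 hs) (not_forall.mp h1).choose_spec

/-- The depth-0 characteristic formula of `x`. -/
noncomputable def chi0 (K : Kripke P U) [Fintype U] : U → PLQ P ι :=
  fun x => plqConj (Finset.univ.toList.map (lit0 K x))

lemma chi0_spec (K : Kripke P U) (Q : ι → ℕ → ℕ → Prop) [Fintype U] (x u : U) :
    K.SatQ Q (chi0 K x) u ↔ ∀ p, K.label x p ↔ K.label u p := by
  rw [chi0, satQ_plqConj]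
  constructor
  · intro hall
    exact agree_of_sat_lit0 K Q x u (hall _ (List.mem_map.mpr ⟨u, Finset.mem_toList.mpr (Finset.mem_univ u), rfl⟩))
  · rintro hagree φ hφ
    simp only [List.mem_map, Finset.mem_toList] at hφ
    obtain ⟨y, -, rfl⟩ := hφ
    exact sat_lit0 K Q x y u hagree

lemma md_chi0 (K : Kripke P U) [Fintype U] (x : U) : (chi0 (ι := ι) K x).md = 0 := by
  refine Nat.le_antisymm ?_ (Nat.zero_le _)
  apply md_plqConj_le
  intro φ hφ
  simp only [List.mem_map] at hφ
  obtain ⟨y, -, rfl⟩ := hφ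
  simp [md_lit0]

/-- Failure of the `(i, S)`-modal biconditionals between `x` and `u`. -/
def BadAt (K : Kripke P U) (Q : ι → ℕ → ℕ → Prop) (e : ℕ) (x u : U) (S : Set U) : Prop :=
  ∃ i, ¬ (Q i (K.succ x).card {z | z ∈ K.succ x ∧ ∃ y ∈ S, CharSat K Q e y z}.ncard ↔
          Q i (K.succ u).card {z | z ∈ K.succ u ∧ ∃ y ∈ S, CharSat K Q e y z}.ncard)

/-- The depth-`e` characteristic formula of `x` in a finite model. -/
noncomputable def chi (K : Kripke P U) (Q : ι → ℕ → ℕ → Prop) [Fintype U] :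
    ℕ → U → PLQ P ι
  | 0, x => chi0 K x
  | (e+1), x => .and (chi0 K x)
      (plqConj ((Finset.univ.powerset ×ˢ (Finset.univ : Finset U)).toList.map
        (fun Su =>
          if h : BadAt K Q e x Su.2 ↑Su.1 then
            if K.SatQ Q (.app h.choose (plqDisj (Su.1.toList.map (chi K Q e)))) x then
              .app h.choose (plqDisj (Su.1.toList.map (chi K Q e)))
            else .neg (.app h.choose (plqDisj (Su.1.toList.map (chi K Q e))))
          else .neg .bot)))

lemma chi_zero (K : Kripke P U) (Q : ι → ℕ → ℕ → Prop) [Fintype U] (x : U) :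
    chi K Q 0 x = chi0 K x := rfl

lemma chi_succ (K : Kripke P U) (Q : ι → ℕ → ℕ → Prop) [Fintype U] (e : ℕ) (x : U) :
    chi K Q (e+1) x = .and (chi0 K x)
      (plqConj ((Finset.univ.powerset ×ˢ (Finset.univ : Finset U)).toList.map
        (fun Su =>
          if h : BadAt K Q e x Su.2 ↑Su.1 then
            if K.SatQ Q (.app h.choose (plqDisj (Su.1.toList.map (chi K Q e)))) x then
              .app h.choose (plqDisj (Su.1.toList.map (chi K Q e)))
            else .neg (.app h.choose (plqDisj (Su.1.toList.map (chi K Q e))))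
          else .neg .bot))) := rfl

lemma md_chi (K : Kripke P U) (Q : ι → ℕ → ℕ → Prop) [Fintype U] :
    ∀ (e : ℕ) (x : U), (chi K Q e x).md ≤ e := by
  intro e
  induction e with
  | zero => intro x; rw [chi_zero]; simp [md_chi0]
  | succ e ih =>
    intro x
    rw [chi_succ]
    show max _ _ ≤ e + 1
    rw [max_le_iff]
    refine ⟨le_trans (le_of_eq (md_chi0 K x)) (Nat.zero_le _), ?_⟩
    apply md_plqConj_le
    intro φ hφ
    simp only [List.mem_map] at hφ
    obtain ⟨Su, -, rfl⟩ := hφ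
    split_ifs with h1 h2
    all_goals simp only [PLQ.md]
    · have : (plqDisj (Su.1.toList.map (chi K Q e))).md ≤ e := by
        apply md_plqDisj_le
        intro ψ hψ
        simp only [List.mem_map] at hψ
        obtain ⟨y, -, rfl⟩ := hψ
        exact ih y
      omega
    · have : (plqDisj (Su.1.toList.map (chi K Q e))).md ≤ e := by
        apply md_plqDisj_le
        intro ψ hψ
        simp only [List.mem_map] at hψ
        obtain ⟨y, -, rfl⟩ := hψ
        exact ih y
      omega
    · simp [PLQ.md]

/-- Satisfaction of `⟨Q i⟩(⋁_{y ∈ S'} χ_e(y))` computes the modal condition. -/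
lemma sat_app_disj (K : Kripke P U) (Q : ι → ℕ → ℕ → Prop) [Fintype U] (e : ℕ)
    (hspec : ∀ x u, K.SatQ Q (chi K Q e x) u ↔ CharSat K Q e x u)
    (i : ι) (S' : Finset U) (z : U) :
    K.SatQ Q (.app i (plqDisj (S'.toList.map (chi K Q e)))) z ↔
    Q i (K.succ z).card {t | t ∈ K.succ z ∧ ∃ y ∈ (↑S' : Set U), CharSat K Q e y t}.ncard := by
  show Q i _ _ ↔ _
  have hset : {t | t ∈ K.succ z ∧ K.SatQ Q (plqDisj (S'.toList.map (chi K Q e))) t} =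
      {t | t ∈ K.succ z ∧ ∃ y ∈ (↑S' : Set U), CharSat K Q e y t} := by
    ext t
    simp only [Set.mem_setOf_eq, satQ_plqDisj, List.mem_map, Finset.mem_toList,
      Finset.mem_coe, and_congr_right_iff]
    intro _
    constructor
    · rintro ⟨φ, ⟨y, hy, rfl⟩, hsat⟩
      exact ⟨y, hy, (hspec y t).mp hsat⟩
    · rintro ⟨y, hy, hc⟩
      exact ⟨chi K Q e y, ⟨y, hy, rfl⟩, (hspec y t).mpr hc⟩
  rw [hset]

lemma chi_spec (K : Kripke P U) (Q : ι → ℕ → ℕ → Prop) [Fintype U] :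
    ∀ (e : ℕ) (x u : U), K.SatQ Q (chi K Q e x) u ↔ CharSat K Q e x u := by
  intro e
  induction e with
  | zero =>
    intro x u
    rw [chi_zero, chi0_spec]
    exact Iff.rfl
  | succ e ih =>
    intro x u
    rw [chi_succ]
    show (K.SatQ Q (chi0 K x) u ∧ K.SatQ Q _ u) ↔ _
    show _ ↔ ((∀ p, K.label x p ↔ K.label u p) ∧ ∀ (i : ι) (S : Set U), _)
    rw [chi0_spec, satQ_plqConj_map]
    constructor
    · rintro ⟨h0, hml⟩
      refine ⟨h0, ?_⟩
      have hnb : ∀ (S : Set U), ¬ BadAt K Q e x u S := by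
        intro S hb
        set S' : Finset U := S.toFinite.toFinset with hS'
        have hcoe : (↑S' : Set U) = S := Set.Finite.coe_toFinset _
        have hb' : BadAt K Q e x u ↑S' := by rw [hcoe]; exact hb
        have hsat := hml (S', u) (Finset.mem_toList.mpr (by simp))
        simp only at hsat
        rw [dif_pos hb'] at hsat
        have hspec := hb'.choose_spec
        have hx := sat_app_disj K Q e ih hb'.choose S' x
        have hu := sat_app_disj K Q e ih hb'.choose S' u
        split_ifs at hsat with hvx
        · exact hspec (iff_of_true (hx.mp hvx) (hu.mp hsat))
        · have hsat' : ¬ K.SatQ Q (.app hb'.choose (plqDisj (S'.toList.map (chi K Q e)))) u := hsat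
          exact hspec (iff_of_false (fun hc => hvx (hx.mpr hc)) (fun hc => hsat' (hu.mpr hc)))
      intro i S
      by_contra hc
      exact hnb S ⟨i, hc⟩
    · rintro ⟨h0, h2⟩
      refine ⟨h0, ?_⟩
      rintro ⟨S', u'⟩ -
      simp only
      by_cases hb : BadAt K Q e x u' ↑S'
      · rw [dif_pos hb]
        have hx := sat_app_disj K Q e ih hb.choose S' x
        have hu := sat_app_disj K Q e ih hb.choose S' u
        have hbi := h2 hb.choose ↑S'
        split_ifs with hvx
        · exact hu.mpr (hbi.mp (hx.mp hvx))
        · show ¬ K.SatQ Q _ u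
          intro hcu
          exact hvx (hx.mpr (hbi.mpr (hu.mp hcu)))
      · rw [dif_neg hb]
        show ¬ False
        exact not_false

end CharSatAux

open CharSatAux

section Transfer

variable {P V W ι : Type}

lemma satQ_sum_inl (M : Kripke P V) (N : Kripke P W) (Q : ι → ℕ → ℕ → Prop)
    (φ : PLQ P ι) : ∀ a, (M.sum N).SatQ Q φ (Sum.inl a) ↔ M.SatQ Q φ a := by
  induction φ with
  | bot => intro a; exact Iff.rfl
  | prop p => intro a; exact Iff.rfl
  | neg φ ih => intro a; exact not_congr (ih a)
  | and φ ψ ih1 ih2 => intro a; exact and_congr (ih1 a) (ih2 a)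
  | or φ ψ ih1 ih2 => intro a; exact or_congr (ih1 a) (ih2 a)
  | app i φ ih =>
    intro a
    show Q i ((M.sum N).succ (Sum.inl a)).card _ ↔ Q i _ _
    have hsucc : (M.sum N).succ (Sum.inl a) = (M.succ a).map ⟨Sum.inl, Sum.inl_injective⟩ := rfl
    rw [hsucc, Finset.card_map]
    have hset : {u | u ∈ (M.succ a).map ⟨Sum.inl, Sum.inl_injective⟩ ∧ (M.sum N).SatQ Q φ u} =
        Sum.inl '' {b | b ∈ M.succ a ∧ M.SatQ Q φ b} := by
      ext u
      cases u with
      | inl b => simp [Finset.mem_map, ih b]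
      | inr b => simp [Finset.mem_map]
    rw [hset, Set.ncard_image_of_injective _ Sum.inl_injective]

lemma satQ_sum_inr (M : Kripke P V) (N : Kripke P W) (Q : ι → ℕ → ℕ → Prop)
    (φ : PLQ P ι) : ∀ a, (M.sum N).SatQ Q φ (Sum.inr a) ↔ N.SatQ Q φ a := by
  induction φ with
  | bot => intro a; exact Iff.rfl
  | prop p => intro a; exact Iff.rfl
  | neg φ ih => intro a; exact not_congr (ih a)
  | and φ ψ ih1 ih2 => intro a; exact and_congr (ih1 a) (ih2 a)
  | or φ ψ ih1 ih2 => intro a; exact or_congr (ih1 a) (ih2 a)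
  | app i φ ih =>
    intro a
    show Q i ((M.sum N).succ (Sum.inr a)).card _ ↔ Q i _ _
    have hsucc : (M.sum N).succ (Sum.inr a) = (N.succ a).map ⟨Sum.inr, Sum.inr_injective⟩ := rfl
    rw [hsucc, Finset.card_map]
    have hset : {u | u ∈ (N.succ a).map ⟨Sum.inr, Sum.inr_injective⟩ ∧ (M.sum N).SatQ Q φ u} =
        Sum.inr '' {b | b ∈ N.succ a ∧ N.SatQ Q φ b} := by
      ext u
      cases u with
      | inl b => simp [Finset.mem_map]
      | inr b => simp [Finset.mem_map, ih b]
    rw [hset, Set.ncard_image_of_injective _ Sum.inr_injective]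

end Transfer

/-- if `(M,w)` and `(N,v)` satisfy the same `PL(𝒬)` formulas of modal
depth at most `d`, then `N,v` satisfies the canonical `𝒬`-characteristic depth-`d`
formula `φ^{𝒬,d}_{M⊔N,w}` of `w` computed in the disjoint union `M ⊔ N`. -/
theorem plq_equiv_implies_charSat
    {P V W ι : Type} [Fintype V] [Fintype W] [DecidableEq V] [DecidableEq W]
    (M : Kripke P V) (N : Kripke P W) (Q : ι → ℕ → ℕ → Prop) (w : V) (v : W) (d : ℕ)
    (h : ∀ φ : PLQ P ι, φ.md ≤ d → (M.SatQ Q φ w ↔ N.SatQ Q φ v)) :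
    CharSat (M.sum N) Q d (Sum.inl w) (Sum.inr v) := by
  classical
  cases d with
  | zero =>
    exact fun p => h (.prop p) (Nat.zero_le _)
  | succ e =>
    refine ⟨fun p => h (.prop p) (Nat.zero_le _), ?_⟩
    intro i S
    have hcoe : (↑(S.toFinite.toFinset) : Set (V ⊕ W)) = S := Set.Finite.coe_toFinset _
    have hsp := chi_spec (M.sum N) Q e
    have h1 := sat_app_disj (M.sum N) Q e hsp i S.toFinite.toFinset (Sum.inl w)
    have h2 := sat_app_disj (M.sum N) Q e hsp i S.toFinite.toFinset (Sum.inr v)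
    rw [hcoe] at h1 h2
    rw [← h1, ← h2, satQ_sum_inl, satQ_sum_inr]
    apply h
    have hd : (plqDisj ((S.toFinite.toFinset).toList.map (chi (M.sum N) Q e))).md ≤ e := by
      apply md_plqDisj_le
      intro φ hφ
      simp only [List.mem_map] at hφ
      obtain ⟨y, -, rfl⟩ := hφ
      exact md_chi (M.sum N) Q e y
    simp only [PLQ.md]
    omega
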